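/- arXiv:2304.01580 — 2 statements merged into one kernel-verified Lean document; each statement's English description precedes it below -/
import Mathlib

section
/- Let v₁,…,v_N, and an additional template ṽ, all be uniform in {0,1}^n, with ṽ independent of the database, and condition on the event W̄_N that no two of v₁,…,v_N are within Hamming distance ε. Then N·V_ε - (N(N-1)/2)·I^ε_{ε+1} ≤ P(ṽ ∈ ∪_{k=1}^N B_ε(v_k) | W̄_N) ≤ N·V_ε, where V_ε is the normalized ε-ball volume and I^ε_{ε+1} is the normalized volume of the intersection of two ε-balls whose centers are at Hamming distance ε+1. -/
open Finset

/-- Normalized volume of a Hamming ball of radius `ε` in `{0,1}^n`. -/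
noncomputable def Vball (n ε : ℕ) : ℝ :=
  (∑ k ∈ Finset.range (ε + 1), (n.choose k : ℝ)) / 2 ^ n

/-- Normalized volume of the intersection of two Hamming `ε`-balls in `{0,1}^n`
whose centers are at Hamming distance `d`. -/
noncomputable def Iball (n ε d : ℕ) : ℝ :=
  (∑ k ∈ Finset.Icc (d - ε) (min ε d),
      (d.choose k : ℝ) *
        ∑ i ∈ Finset.range (min (ε - k) (ε + k - d) + 1), ((n - d).choose i : ℝ)) / 2 ^ n

variable {n : ℕ}

lemma hd_card (w u : Fin n → Bool) :
    hammingDist w u = (univ.filter fun i => w i ≠ u i).card := rfl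

/-- the diff-set map is injective -/
lemma dset_inj (u : Fin n → Bool) : Function.Injective
    (fun w : Fin n → Bool => univ.filter fun i => w i ≠ u i) := by
  intro w w' h
  dsimp only at h
  funext i
  by_cases hw : w i = u i <;> by_cases hw' : w' i = u i
  · rw [hw, hw']
  · exfalso; have : i ∈ univ.filter fun i => w' i ≠ u i := by simp [hw']
    rw [← h] at this; simp [hw] at this
  · exfalso; have : i ∈ univ.filter fun i => w i ≠ u i := by simp [hw]
    rw [h] at this; simp [hw'] at this
  · rw [Bool.eq_not_of_ne hw, Bool.eq_not_of_ne hw']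

lemma count_card_le (S : Finset (Fin n)) (m : ℕ) :
    (S.powerset.filter fun B => B.card ≤ m).card = ∑ i ∈ Finset.range (m+1), S.card.choose i := by
  classical
  rw [Finset.card_eq_sum_card_fiberwise (f := Finset.card) (t := Finset.range (m+1))
    (by intro x hx; simp only [mem_coe, mem_filter] at hx; simp [Nat.lt_succ_iff, hx.2])]
  refine Finset.sum_congr rfl fun i hi => ?_
  rw [Finset.mem_range, Nat.lt_succ_iff] at hi
  rw [← Finset.card_powersetCard i S, Finset.powersetCard_eq_filter]
  congr 1
  ext B
  simp only [mem_filter, mem_powerset]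
  constructor
  · rintro ⟨⟨h1, h2⟩, h3⟩; exact ⟨h1, h3⟩
  · rintro ⟨h1, h3⟩; exact ⟨⟨h1, h3 ▸ hi⟩, h3⟩

lemma distUpd (x y : Fin n → Bool) (j : Fin n) (b : Bool) :
    hammingDist x (Function.update y j b) + (if x j ≠ y j then 1 else 0)
      = hammingDist x y + (if x j ≠ b then 1 else 0) := by
  classical
  have key : ∀ z : Fin n → Bool, hammingDist x z
      = ((univ.erase j).filter fun i => x i ≠ z i).card + (if x j ≠ z j then 1 else 0) := by
    intro z
    rw [hd_card]
    have huniv : (univ : Finset (Fin n)) = insert j (univ.erase j) := by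
      rw [Finset.insert_erase (mem_univ j)]
    conv_lhs => rw [huniv]
    rw [Finset.filter_insert]
    by_cases h : x j ≠ z j
    · rw [if_pos h, if_pos h, Finset.card_insert_of_notMem (by simp)]
    · rw [if_neg h, if_neg h, Nat.add_zero]
  rw [key y, key (Function.update y j b)]
  have h1 : ((univ.erase j).filter fun i => x i ≠ Function.update y j b i)
      = ((univ.erase j).filter fun i => x i ≠ y i) := by
    apply Finset.filter_congr
    intro i hi
    rw [Function.update_of_ne (Finset.ne_of_mem_erase hi)]
  rw [h1, Function.update_self]
  ring

/-- intersection of two Hamming balls as a Finset -/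
def Iset (ε : ℕ) (u v : Fin n → Bool) : Finset (Fin n → Bool) :=
  univ.filter fun w => hammingDist w u ≤ ε ∧ hammingDist w v ≤ ε

lemma bool_ne_of_ne_of_ne {a b c : Bool} (h1 : a ≠ b) (h2 : c ≠ a) : c = b := by
  revert h1 h2; cases a <;> cases b <;> cases c <;> decide

lemma mono_step (ε : ℕ) (u v : Fin n → Bool) (j : Fin n) (hj : u j ≠ v j) :
    (Iset ε u v).card ≤ (Iset ε u (Function.update v j (u j))).card := by
  classical
  set v' := Function.update v j (u j) with hv'
  have hv'j : v' j = u j := Function.update_self j (u j) v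
  -- key distance facts for any w
  have key : ∀ w : Fin n → Bool, hammingDist w u ≤ ε → hammingDist w v ≤ ε →
      ¬ hammingDist w v' ≤ ε →
      w j = v j ∧ hammingDist w v' = hammingDist w v + 1 := by
    intro w h1 h2 h3
    have hd := distUpd w v j (u j)
    rw [← hv'] at hd
    by_cases hwj : w j = v j
    · rw [if_neg (by simpa using hwj)] at hd
      have hwu : w j ≠ u j := by rw [hwj]; exact Ne.symm hj
      rw [if_pos (by simpa using hwu)] at hd
      exact ⟨hwj, by omega⟩
    · exfalso
      have hwu : w j = u j := bool_ne_of_ne_of_ne (Ne.symm hj) hwj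
      rw [if_pos hwj, if_neg (by simpa using hwu)] at hd
      omega
  apply Finset.card_le_card_of_injOn
    (fun w => if hammingDist w v' ≤ ε then w else Function.update w j (u j))
  · intro w hw
    simp only [Iset, mem_coe, mem_filter, mem_univ, true_and] at hw ⊢
    obtain ⟨h1, h2⟩ := hw
    by_cases h3 : hammingDist w v' ≤ ε
    · rw [if_pos h3]; exact ⟨h1, h3⟩
    · rw [if_neg h3]
      obtain ⟨hwj, hdw⟩ := key w h1 h2 h3
      have hwu : w j ≠ u j := by rw [hwj]; exact Ne.symm hj
      constructor
      · have hd2 := distUpd u w j (u j)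
        rw [if_pos (by simpa using (Ne.symm hwu)), if_neg (by simp)] at hd2
        rw [hammingDist_comm]
        rw [hammingDist_comm w u] at h1
        omega
      · have hd3 := distUpd v' w j (u j)
        rw [if_pos (by rw [hv'j]; simpa using (Ne.symm hwu)),
          if_neg (by rw [hv'j]; simp)] at hd3
        rw [hammingDist_comm]
        rw [hammingDist_comm w v'] at hdw
        omega
  · intro w1 hw1 w2 hw2 heq
    simp only [Iset, Finset.coe_filter, Set.mem_setOf_eq, mem_univ, true_and] at hw1 hw2
    dsimp only at heq
    by_cases h1 : hammingDist w1 v' ≤ ε <;> by_cases h2 : hammingDist w2 v' ≤ ε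
    · rwa [if_pos h1, if_pos h2] at heq
    · exfalso
      rw [if_pos h1, if_neg h2] at heq
      obtain ⟨hwj2, hdw2⟩ := key w2 hw2.1 hw2.2 h2
      have hd4 := distUpd v w2 j (u j)
      rw [if_neg (by simpa using hwj2.symm), if_pos (by simpa using (Ne.symm hj))] at hd4
      rw [← heq, hammingDist_comm v w1, hammingDist_comm v w2] at hd4
      have h5 : hammingDist w1 v ≤ ε := hw1.2
      omega
    · exfalso
      rw [if_neg h1, if_pos h2] at heq
      obtain ⟨hwj1, hdw1⟩ := key w1 hw1.1 hw1.2 h1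
      have hd4 := distUpd v w1 j (u j)
      rw [if_neg (by simpa using hwj1.symm), if_pos (by simpa using (Ne.symm hj))] at hd4
      rw [heq, hammingDist_comm v w2, hammingDist_comm v w1] at hd4
      have h5 : hammingDist w2 v ≤ ε := hw2.2
      omega
    · rw [if_neg h1, if_neg h2] at heq
      obtain ⟨hwj1, _⟩ := key w1 hw1.1 hw1.2 h1
      obtain ⟨hwj2, _⟩ := key w2 hw2.1 hw2.2 h2
      funext i
      by_cases hij : i = j
      · subst hij; rw [hwj1, hwj2]
      · have := congrFun heq i
        rwa [Function.update_of_ne hij, Function.update_of_ne hij] at this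

lemma ball_card (ε : ℕ) (u : Fin n → Bool) :
    (univ.filter fun w : Fin n → Bool => hammingDist w u ≤ ε).card
      = ∑ k ∈ Finset.range (ε + 1), n.choose k := by
  classical
  have h : (univ.filter fun w : Fin n → Bool => hammingDist w u ≤ ε).card
      = ((univ : Finset (Fin n)).powerset.filter fun B => B.card ≤ ε).card := by
    apply Finset.card_bij (fun w _ => univ.filter fun i => w i ≠ u i)
    · intro w hw
      simp only [mem_filter, mem_powerset] at hw ⊢
      exact ⟨Finset.subset_univ _, hw.2⟩
    · intro a ha b hb hab
      exact dset_inj u hab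
    · intro B hB
      refine ⟨fun i => if i ∈ B then !(u i) else u i, by simp_all [hd_card, mem_filter], ?_⟩
      ext i
      simp only [mem_filter, mem_univ, true_and]
      by_cases h : i ∈ B <;> simp [h]
  rw [h, count_card_le]
  simp

/-- numerator of `Iball n ε (ε+1)` as a natural number -/
def Fnat (n ε : ℕ) : ℕ :=
  ∑ k ∈ Finset.Icc 1 ε, (ε + 1).choose k *
    ∑ i ∈ Finset.range (min (ε - k) (k - 1) + 1), (n - (ε + 1)).choose i

lemma base_bound (ε : ℕ) (u v : Fin n → Bool) (huv : hammingDist u v = ε + 1) :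
    (Iset ε u v).card ≤ Fnat n ε := by
  classical
  set D : Finset (Fin n) := univ.filter fun i => u i ≠ v i with hD
  have hDcard : D.card = ε + 1 := by rw [hD, ← hd_card u v, huv]
  have f2 : ∀ w : Fin n → Bool, hammingDist w v
      = (D \ (univ.filter fun i => w i ≠ u i)).card
        + ((univ.filter fun i => w i ≠ u i) \ D).card := by
    intro w
    rw [hd_card]
    have hset : (univ.filter fun i => w i ≠ v i)
        = (D \ (univ.filter fun i => w i ≠ u i))
          ∪ ((univ.filter fun i => w i ≠ u i) \ D) := by
      ext i
      simp only [mem_filter, mem_univ, true_and, mem_union, mem_sdiff, hD]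
      generalize u i = a at *
      generalize v i = b at *
      generalize w i = c at *
      revert a b c; decide
    rw [hset, Finset.card_union_of_disjoint]
    rw [Finset.disjoint_left]
    intro i hi hi2
    rw [mem_sdiff] at hi hi2
    exact hi.2 hi2.1
  have f3 : ∀ w : Fin n → Bool,
      ((univ.filter fun i => w i ≠ u i) ∩ D).card
        + (D \ (univ.filter fun i => w i ≠ u i)).card = ε + 1 := by
    intro w
    rw [Finset.inter_comm, Finset.card_inter_add_card_sdiff, hDcard]
  have f1 : ∀ w : Fin n → Bool, hammingDist w u
      = ((univ.filter fun i => w i ≠ u i) ∩ D).card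
        + ((univ.filter fun i => w i ≠ u i) \ D).card := by
    intro w
    rw [hd_card, ← Finset.card_inter_add_card_sdiff (univ.filter fun i => w i ≠ u i) D]
  have hmem : ∀ w ∈ Iset ε u v,
      ((univ.filter fun i => w i ≠ u i) ∩ D).card ∈ Finset.Icc 1 ε := by
    intro w hw
    simp only [Iset, mem_filter, mem_univ, true_and] at hw
    have h1 := f1 w; have h2 := f2 w; have h3 := f3 w
    simp only [Finset.mem_Icc]
    omega
  rw [Finset.card_eq_sum_card_fiberwise hmem]
  apply Finset.sum_le_sum
  intro k hk
  have hfiber : ((Iset ε u v).filter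
        fun w => ((univ.filter fun i => w i ≠ u i) ∩ D).card = k).card
      ≤ ((D.powersetCard k) ×ˢ ((univ \ D).powerset.filter
          fun B => B.card ≤ min (ε - k) (k - 1))).card := by
    apply Finset.card_le_card_of_injOn
      (fun w => ((univ.filter fun i => w i ≠ u i) ∩ D,
                 (univ.filter fun i => w i ≠ u i) \ D))
    · intro w hw
      simp only [mem_coe, mem_filter, Iset, mem_univ, true_and] at hw
      obtain ⟨⟨h1, h2⟩, h4⟩ := hw
      have e1 := f1 w; have e2 := f2 w; have e3 := f3 w
      simp only [mem_coe, Finset.mem_product, Finset.mem_powersetCard, mem_filter, mem_powerset]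
      refine ⟨⟨Finset.inter_subset_right, h4⟩, ?_, ?_⟩
      · exact Finset.sdiff_subset_sdiff (Finset.subset_univ _) (le_refl D)
      · simp only [le_min_iff]
        omega
    · intro w1 hw1 w2 hw2 heq
      simp only [Prod.mk.injEq] at heq
      apply dset_inj u
      dsimp only
      rw [← Finset.sdiff_union_inter (univ.filter fun i => w1 i ≠ u i) D,
        ← Finset.sdiff_union_inter (univ.filter fun i => w2 i ≠ u i) D,
        heq.1, heq.2]
  refine le_trans hfiber ?_
  rw [Finset.card_product, Finset.card_powersetCard, hDcard, count_card_le]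
  have : (univ \ D).card = n - (ε + 1) := by
    rw [Finset.card_sdiff_of_subset (Finset.subset_univ _), hDcard, Finset.card_univ,
      Fintype.card_fin]
  rw [this]

lemma inter_bound (ε : ℕ) (u v : Fin n → Bool) (huv : ε < hammingDist u v) :
    (Iset ε u v).card ≤ Fnat n ε := by
  classical
  obtain ⟨d, hd⟩ : ∃ d, hammingDist u v = ε + 1 + d := ⟨hammingDist u v - (ε+1), by omega⟩
  clear huv
  induction d generalizing v with
  | zero => exact base_bound ε u v (by omega)
  | succ d ih =>
    have hpos : 0 < hammingDist u v := by omega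
    rw [hd_card, Finset.card_pos] at hpos
    obtain ⟨j, hj⟩ := hpos
    simp only [mem_filter, mem_univ, true_and] at hj
    have hdist := distUpd u v j (u j)
    rw [if_pos (by simpa using hj), if_neg (by simp)] at hdist
    exact le_trans (mono_step ε u v j hj)
      (ih (Function.update v j (u j)) (by omega))

lemma bonferroni {ι α : Type*} [DecidableEq ι] [DecidableEq α] (s : Finset ι)
    (A : ι → Finset α) :
    2 * ∑ i ∈ s, (A i).card
      ≤ 2 * (s.biUnion A).card + ∑ p ∈ s.offDiag, (A p.1 ∩ A p.2).card := by
  classical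
  induction s using Finset.cons_induction with
  | empty => simp
  | cons a s ha ih =>
    rw [Finset.cons_eq_insert]
    have hdisj1 : Disjoint (s.offDiag ∪ {a} ×ˢ s) (s ×ˢ {a}) := by
      rw [Finset.disjoint_left]
      rintro ⟨p1, p2⟩ hp hq
      simp only [Finset.mem_product, Finset.mem_singleton] at hq
      rcases Finset.mem_union.mp hp with h | h
      · exact ha (hq.2 ▸ (Finset.mem_offDiag.mp h).2.1)
      · simp only [Finset.mem_product, Finset.mem_singleton] at h
        exact ha (h.1 ▸ hq.1)
    have hdisj2 : Disjoint s.offDiag ({a} ×ˢ s) := by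
      rw [Finset.disjoint_left]
      rintro ⟨p1, p2⟩ hp hq
      simp only [Finset.mem_product, Finset.mem_singleton] at hq
      exact ha (hq.1 ▸ (Finset.mem_offDiag.mp hp).1)
    rw [Finset.offDiag_insert ha, Finset.sum_union hdisj1, Finset.sum_union hdisj2,
      Finset.sum_insert ha, Finset.biUnion_insert]
    have hsum1 : ∑ p ∈ {a} ×ˢ s, (A p.1 ∩ A p.2).card = ∑ j ∈ s, (A a ∩ A j).card := by
      rw [Finset.sum_product, Finset.sum_singleton]
    have hsum2 : ∑ p ∈ s ×ˢ {a}, (A p.1 ∩ A p.2).card = ∑ j ∈ s, (A a ∩ A j).card := by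
      rw [Finset.sum_product]
      simp [Finset.inter_comm]
    have key := Finset.card_union_add_card_inter (A a) (s.biUnion A)
    have hsub : (A a ∩ s.biUnion A).card ≤ ∑ j ∈ s, (A a ∩ A j).card := by
      refine le_trans (Finset.card_le_card ?_) Finset.card_biUnion_le
      intro x hx
      rw [Finset.mem_inter, Finset.mem_biUnion] at hx
      obtain ⟨hx1, j, hj, hx2⟩ := hx
      exact Finset.mem_biUnion.mpr ⟨j, hj, Finset.mem_inter.mpr ⟨hx1, hx2⟩⟩
    omega

/-- Bounds on the conditional probability that an independent uniform template `ṽ`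
matches one of `N` uniform templates, given that no two of them are within Hamming
distance `ε` of each other. -/
theorem cond_prob_match_bounds (n N ε : ℕ)
    (hne : (univ.filter (fun f : Fin N → (Fin n → Bool) =>
        ∀ i j, i ≠ j → ε < hammingDist (f i) (f j))).Nonempty) :
    (N : ℝ) * Vball n ε - (N : ℝ) * ((N : ℝ) - 1) / 2 * Iball n ε (ε + 1) ≤
      ((univ.filter (fun p : (Fin N → (Fin n → Bool)) × (Fin n → Bool) =>
          (∀ i j, i ≠ j → ε < hammingDist (p.1 i) (p.1 j)) ∧
            ∃ k, hammingDist p.2 (p.1 k) ≤ ε)).card : ℝ) /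
        (((univ.filter (fun f : Fin N → (Fin n → Bool) =>
            ∀ i j, i ≠ j → ε < hammingDist (f i) (f j))).card : ℝ) * 2 ^ n) ∧
    ((univ.filter (fun p : (Fin N → (Fin n → Bool)) × (Fin n → Bool) =>
        (∀ i j, i ≠ j → ε < hammingDist (p.1 i) (p.1 j)) ∧
          ∃ k, hammingDist p.2 (p.1 k) ≤ ε)).card : ℝ) /
      (((univ.filter (fun f : Fin N → (Fin n → Bool) =>
          ∀ i j, i ≠ j → ε < hammingDist (f i) (f j))).card : ℝ) * 2 ^ n) ≤
    (N : ℝ) * Vball n ε := by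
  classical
  have h1 : ε + 1 - ε = 1 := by omega
  have h2 : min ε (ε + 1) = ε := by omega
  have h3 : ∀ k : ℕ, ε + k - (ε + 1) = k - 1 := fun k => by omega
  set S := univ.filter (fun f : Fin N → (Fin n → Bool) =>
      ∀ i j, i ≠ j → ε < hammingDist (f i) (f j)) with hS
  set P := univ.filter (fun p : (Fin N → (Fin n → Bool)) × (Fin n → Bool) =>
      (∀ i j, i ≠ j → ε < hammingDist (p.1 i) (p.1 j)) ∧
        ∃ k, hammingDist p.2 (p.1 k) ≤ ε) with hP
  set B := ∑ k ∈ Finset.range (ε + 1), n.choose k with hB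
  have hcond : ∀ f ∈ S, ∀ i j : Fin N, i ≠ j → ε < hammingDist (f i) (f j) := by
    intro f hf
    rw [hS, mem_filter] at hf
    exact hf.2
  have hU : ∀ f : Fin N → (Fin n → Bool),
      (univ.filter fun w => ∃ k, hammingDist w (f k) ≤ ε)
        = univ.biUnion (fun k : Fin N =>
            univ.filter fun w => hammingDist w (f k) ≤ ε) := by
    intro f; ext w; simp
  have hsum : ∀ f : Fin N → (Fin n → Bool),
      ∑ k : Fin N, (univ.filter fun w => hammingDist w (f k) ≤ ε).card = N * B := by
    intro f
    rw [Finset.sum_congr rfl (fun k _ => ball_card ε (f k)), Finset.sum_const,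
      Finset.card_univ, Fintype.card_fin, smul_eq_mul]
  have A1 : P.card = ∑ f ∈ S,
      (univ.filter fun w => ∃ k, hammingDist w (f k) ≤ ε).card := by
    rw [Finset.card_eq_sum_card_fiberwise (f := Prod.fst) (t := S)
      (by
        intro p hp
        rw [hP, mem_coe, mem_filter] at hp
        rw [hS, mem_coe, mem_filter]
        exact ⟨mem_univ _, hp.2.1⟩)]
    refine Finset.sum_congr rfl fun f hf => ?_
    apply Finset.card_bij (fun p _ => p.2)
    · intro p hp
      rw [mem_filter, hP, mem_filter] at hp
      obtain ⟨⟨_, _, hex⟩, h1⟩ := hp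
      rw [mem_filter]
      rw [h1] at hex
      exact ⟨mem_univ _, hex⟩
    · intro p hp q hq h
      rw [mem_filter] at hp hq
      exact Prod.ext (hp.2.trans hq.2.symm) h
    · intro w hw
      rw [mem_filter] at hw
      refine ⟨(f, w), ?_, rfl⟩
      rw [mem_filter, hP, mem_filter]
      exact ⟨⟨mem_univ _, hcond f hf, hw.2⟩, rfl⟩
  have A2 : ∀ f : Fin N → (Fin n → Bool),
      (univ.filter fun w => ∃ k, hammingDist w (f k) ≤ ε).card ≤ N * B := by
    intro f
    rw [hU f]
    exact le_trans Finset.card_biUnion_le (le_of_eq (hsum f))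
  have A3 : ∀ f ∈ S, 2 * (N * B)
      ≤ 2 * (univ.filter fun w => ∃ k, hammingDist w (f k) ≤ ε).card
        + (N * N - N) * Fnat n ε := by
    intro f hf
    have hb := bonferroni (univ : Finset (Fin N))
      (fun k => univ.filter fun w => hammingDist w (f k) ≤ ε)
    rw [← hU f, hsum f] at hb
    have hoff : ∑ p ∈ (univ : Finset (Fin N)).offDiag,
        ((univ.filter fun w => hammingDist w (f p.1) ≤ ε)
          ∩ (univ.filter fun w => hammingDist w (f p.2) ≤ ε)).card
        ≤ (N * N - N) * Fnat n ε := by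
      have hle : ∀ q ∈ (univ : Finset (Fin N)).offDiag,
          ((univ.filter fun w => hammingDist w (f q.1) ≤ ε)
            ∩ (univ.filter fun w => hammingDist w (f q.2) ≤ ε)).card ≤ Fnat n ε := by
        intro q hq
        rw [Finset.mem_offDiag] at hq
        have heq : (univ.filter fun w => hammingDist w (f q.1) ≤ ε)
            ∩ (univ.filter fun w => hammingDist w (f q.2) ≤ ε)
            = Iset ε (f q.1) (f q.2) := by
          ext w
          simp [Iset, Finset.mem_inter]
        rw [heq]
        exact inter_bound ε _ _ (hcond f hf q.1 q.2 hq.2.2)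
      calc _ ≤ ∑ _p ∈ (univ : Finset (Fin N)).offDiag, Fnat n ε :=
              Finset.sum_le_sum hle
        _ = (N * N - N) * Fnat n ε := by
              rw [Finset.sum_const, smul_eq_mul, Finset.offDiag_card,
                Finset.card_univ, Fintype.card_fin]
    linarith
  -- global natural-number bounds
  have hup : P.card ≤ S.card * (N * B) := by
    rw [A1]
    calc ∑ f ∈ S, (univ.filter fun w => ∃ k, hammingDist w (f k) ≤ ε).card
        ≤ ∑ _f ∈ S, N * B := Finset.sum_le_sum fun f _ => A2 f
      _ = S.card * (N * B) := by rw [Finset.sum_const, smul_eq_mul]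
  have hlo : S.card * (2 * (N * B)) ≤ 2 * P.card + S.card * ((N * N - N) * Fnat n ε) := by
    calc S.card * (2 * (N * B)) = ∑ _f ∈ S, 2 * (N * B) := by
          rw [Finset.sum_const, smul_eq_mul]
      _ ≤ ∑ f ∈ S, (2 * (univ.filter fun w => ∃ k, hammingDist w (f k) ≤ ε).card
            + (N * N - N) * Fnat n ε) := Finset.sum_le_sum A3
      _ = 2 * P.card + S.card * ((N * N - N) * Fnat n ε) := by
          rw [Finset.sum_add_distrib, ← Finset.mul_sum, ← A1, Finset.sum_const, smul_eq_mul]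
  -- pass to the reals
  have hM : 0 < S.card := Finset.card_pos.mpr hne
  have hm : (1 : ℝ) ≤ (S.card : ℝ) := by exact_mod_cast hM
  have ht : (0 : ℝ) < 2 ^ n := by positivity
  have hmt : (0 : ℝ) < (S.card : ℝ) * 2 ^ n := by positivity
  have hV : Vball n ε * 2 ^ n = (B : ℝ) := by
    unfold Vball
    rw [div_mul_cancel₀ _ (ne_of_gt ht), hB]
    push_cast
    rfl
  have hI : Iball n ε (ε + 1) * 2 ^ n = (Fnat n ε : ℝ) := by
    unfold Iball
    rw [div_mul_cancel₀ _ (ne_of_gt ht)]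
    unfold Fnat
    rw [h1, h2]
    push_cast
    refine Finset.sum_congr rfl fun k _ => ?_
    rw [h3 k]
  have hNN : N ≤ N * N := by
    rcases Nat.eq_zero_or_pos N with h | h
    · simp [h]
    · exact Nat.le_mul_of_pos_left N h
  have hupR : (P.card : ℝ) ≤ (S.card : ℝ) * ((N : ℝ) * (B : ℝ)) := by
    exact_mod_cast hup
  have hloR : (S.card : ℝ) * (2 * ((N : ℝ) * (B : ℝ)))
      ≤ 2 * (P.card : ℝ)
        + (S.card : ℝ) * (((N : ℝ) * (N : ℝ) - (N : ℝ)) * (Fnat n ε : ℝ)) := by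
    have h2 : ((S.card * (2 * (N * B)) : ℕ) : ℝ)
        ≤ ((2 * P.card + S.card * ((N * N - N) * Fnat n ε) : ℕ) : ℝ) := Nat.cast_le.mpr hlo
    push_cast [Nat.cast_sub hNN] at h2
    linarith [h2]
  constructor
  · rw [le_div_iff₀ hmt]
    have e1 : ((N : ℝ) * Vball n ε - (N : ℝ) * ((N : ℝ) - 1) / 2 * Iball n ε (ε + 1))
        * ((S.card : ℝ) * 2 ^ n)
        = (N : ℝ) * (S.card : ℝ) * (Vball n ε * 2 ^ n)
          - (N : ℝ) * ((N : ℝ) - 1) / 2 * (S.card : ℝ) * (Iball n ε (ε + 1) * 2 ^ n) := by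
      ring
    rw [e1, hV, hI]
    have e2 : (S.card : ℝ) * (((N : ℝ) * (N : ℝ) - (N : ℝ)) * (Fnat n ε : ℝ))
        = 2 * ((N : ℝ) * ((N : ℝ) - 1) / 2 * (S.card : ℝ) * (Fnat n ε : ℝ)) := by
      ring
    linarith [hloR]
  · rw [div_le_iff₀ hmt]
    calc (P.card : ℝ) ≤ (S.card : ℝ) * ((N : ℝ) * (B : ℝ)) := hupR
      _ = (N : ℝ) * Vball n ε * ((S.card : ℝ) * 2 ^ n) := by rw [← hV]; ring
end

section
/- If N < 1 + 2^{-ε}·((1 - ε/n)/(ε/n))^{⌈(ε+1)/2⌉}/√(8ε(1 - ε/n)), with ε/n < 1/2, then N·V_ε - (N(N-1)/2)·I^ε_{ε+1} > 0. -/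
set_option maxHeartbeats 1600000

theorem step1 (n ε j : ℕ) (hj : j + 1 ≤ ε) :
    n.choose j * (n - ε) ≤ n.choose (j+1) * ε := by
  have h1 : n.choose (j+1) * (j+1) = n.choose j * (n - j) := Nat.choose_succ_right_eq n j
  have hjε : j ≤ ε := Nat.le_of_succ_le hj
  have h2 : (j+1) * (n - ε) ≤ ε * (n - j) := Nat.mul_le_mul hj (Nat.sub_le_sub_left hjε n)
  have h3 : n.choose j * ((j+1) * (n - ε)) ≤ n.choose j * (ε * (n - j)) :=
    Nat.mul_le_mul_left _ h2
  have h4 : n.choose j * (ε * (n - j)) = (n.choose (j+1) * ε) * (j+1) := by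
    calc n.choose j * (ε * (n - j)) = ε * (n.choose j * (n - j)) := by ring
    _ = ε * (n.choose (j+1) * (j+1)) := by rw [h1]
    _ = n.choose (j+1) * ε * (j+1) := by ring
  have h5 : (n.choose j * (n - ε)) * (j+1) ≤ (n.choose (j+1) * ε) * (j+1) := by
    calc (n.choose j * (n - ε)) * (j+1) = n.choose j * ((j+1) * (n-ε)) := by ring
    _ ≤ n.choose j * (ε * (n - j)) := h3
    _ = (n.choose (j+1) * ε) * (j+1) := h4
  exact Nat.le_of_mul_le_mul_right h5 (Nat.succ_pos j)

theorem iter1 (n ε : ℕ) : ∀ t j, j + t ≤ ε →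
    n.choose j * (n - ε)^t ≤ n.choose (j+t) * ε^t := by
  intro t
  induction t with
  | zero => intro j _; simp
  | succ t ih =>
    intro j hjt
    have hj1 : j + 1 ≤ ε := by omega
    calc n.choose j * (n-ε)^(t+1) = (n.choose j * (n-ε)) * (n-ε)^t := by ring
    _ ≤ (n.choose (j+1) * ε) * (n-ε)^t := Nat.mul_le_mul_right _ (step1 n ε j hj1)
    _ = (n.choose (j+1) * (n-ε)^t) * ε := by ring
    _ ≤ (n.choose (j+1+t) * ε^t) * ε := Nat.mul_le_mul_right _ (ih (j+1) (by omega))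
    _ = n.choose (j+(t+1)) * ε^(t+1) := by rw [show j+1+t = j+(t+1) by omega]; ring

theorem dbl (n j : ℕ) (h : 3*j + 2 ≤ n) : 2 * n.choose j ≤ n.choose (j+1) := by
  have h1 : n.choose (j+1) * (j+1) = n.choose j * (n - j) := Nat.choose_succ_right_eq n j
  have h5 : (2 * n.choose j) * (j+1) ≤ n.choose (j+1) * (j+1) := by
    rw [h1]
    calc 2 * n.choose j * (j+1) = n.choose j * (2*(j+1)) := by ring
    _ ≤ n.choose j * (n - j) := Nat.mul_le_mul_left _ (by omega)
  exact Nat.le_of_mul_le_mul_right h5 (Nat.succ_pos j)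

theorem sum_le (n M : ℕ) (h : ∀ j, j < M → 2 * n.choose j ≤ n.choose (j+1)) :
    ∑ i ∈ Finset.range (M+1), n.choose i ≤ 2 * n.choose M := by
  induction M with
  | zero => simp
  | succ M ih =>
    rw [Finset.sum_range_succ]
    have := ih (fun j hj => h j (by omega))
    have h2 := h M (by omega)
    omega

theorem lower_bound_pos_of_N_lt_Nmax (n ε N : ℕ) (hN : 1 ≤ N)
    (hhalf : (ε : ℝ) / n < 1/2)
    (hNmax : (N : ℝ) < 1 +
      (2 : ℝ) ^ (-(ε : ℝ)) * ((1 - (ε : ℝ) / n) / ((ε : ℝ) / n)) ^ ((ε + 2) / 2) /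
        Real.sqrt (8 * ε * (1 - (ε : ℝ) / n))) :
    0 < (N : ℝ) * Vball n ε - (N : ℝ) * ((N : ℝ) - 1) / 2 * Iball n ε (ε + 1) := by
  by_cases hp : (ε : ℝ) / n = 0
  · exfalso
    have hc : (ε + 2) / 2 ≠ 0 := by omega
    rw [hp] at hNmax
    simp [hc] at hNmax
    have : (1:ℝ) ≤ (N:ℝ) := by exact_mod_cast hN
    linarith
  -- main case
  have hn0 : n ≠ 0 := by rintro rfl; simp at hp
  have hε0 : ε ≠ 0 := by rintro rfl; simp at hp
  have hnR : (0:ℝ) < n := by positivity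
  have h2ε : 2 * ε < n := by
    by_contra h
    push_neg at h
    have : (n:ℝ) ≤ 2 * ε := by exact_mod_cast h
    rw [div_lt_iff₀ hnR] at hhalf
    linarith
  set M : ℕ := (ε - 1) / 2 with hM
  set c : ℕ := (ε + 2) / 2 with hc
  have hMc : M + c = ε := by omega
  have hMε : M ≤ ε := by omega
  set X : ℝ := (n.choose ε : ℝ) with hX
  have hXpos : 0 < X := by
    rw [hX]
    exact_mod_cast Nat.choose_pos (by omega : ε ≤ n)
  set r : ℝ := (ε : ℝ) / ((n:ℝ) - ε) with hr
  have hnε : (0:ℝ) < (n:ℝ) - ε := by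
    have : (ε:ℝ) < n := by exact_mod_cast (by omega : ε < n)
    linarith
  have hrpos : 0 < r := by positivity
  -- bound C(n,M) ≤ X * r^c
  have hCM : (n.choose M : ℝ) ≤ X * r ^ c := by
    have h1 : n.choose M * (n - ε)^c ≤ n.choose ε * ε^c := by
      have := iter1 n ε c M (by omega)
      rwa [hMc] at this
    have hcast : ((n - ε : ℕ) : ℝ) = (n:ℝ) - ε := Nat.cast_sub (by omega : ε ≤ n)
    have h1R : (n.choose M : ℝ) * ((n:ℝ) - ε)^c ≤ X * (ε:ℝ)^c := by
      rw [hX, ← hcast]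
      exact_mod_cast h1
    rw [hr, div_pow, ← mul_div_assoc, le_div_iff₀ (by positivity)]
    linarith
  -- sum over range (M+1) of C(n,i) ≤ 2 C(n,M)
  have hsumM : (∑ i ∈ Finset.range (M+1), (n.choose i : ℝ)) ≤ 2 * (n.choose M : ℝ) := by
    exact_mod_cast (sum_le n M (fun j hj => dbl n j (by omega)))
  -- Iball rewrite
  have hIeq : Iball n ε (ε+1) = (∑ k ∈ Finset.Icc 1 ε,
      ((ε+1).choose k : ℝ) *
        ∑ i ∈ Finset.range (min (ε - k) (ε + k - (ε+1)) + 1), ((n - (ε+1)).choose i : ℝ)) / 2 ^ n := by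
    unfold Iball
    rw [show (ε+1)-ε = 1 by omega, min_eq_left (by omega : ε ≤ ε+1)]
  -- inner bound
  have hInner : ∀ k ∈ Finset.Icc 1 ε,
      (∑ i ∈ Finset.range (min (ε - k) (ε + k - (ε+1)) + 1), ((n - (ε+1)).choose i : ℝ))
        ≤ 2 * (X * r ^ c) := by
    intro k hk
    rw [Finset.mem_Icc] at hk
    have hm : min (ε - k) (ε + k - (ε+1)) + 1 ≤ M + 1 := by
      have h1 := Nat.min_le_left (ε - k) (ε + k - (ε+1))
      have h2 := Nat.min_le_right (ε - k) (ε + k - (ε+1))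
      omega
    calc (∑ i ∈ Finset.range (min (ε - k) (ε + k - (ε+1)) + 1), ((n - (ε+1)).choose i : ℝ))
        ≤ ∑ i ∈ Finset.range (min (ε - k) (ε + k - (ε+1)) + 1), (n.choose i : ℝ) := by
          apply Finset.sum_le_sum
          intro i _
          exact_mod_cast Nat.choose_le_choose i (by omega : n - (ε+1) ≤ n)
      _ ≤ ∑ i ∈ Finset.range (M+1), (n.choose i : ℝ) := by
          apply Finset.sum_le_sum_of_subset_of_nonneg (Finset.range_subset_range.mpr hm)
          intro i _ _; positivity
      _ ≤ 2 * (n.choose M : ℝ) := hsumM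
      _ ≤ 2 * (X * r ^ c) := by linarith
  -- sum of choose (ε+1)
  have hsumC : (∑ k ∈ Finset.Icc 1 ε, ((ε+1).choose k : ℝ)) ≤ 2^(ε+1) := by
    have h1 : (∑ k ∈ Finset.Icc 1 ε, (ε+1).choose k) ≤ ∑ k ∈ Finset.range (ε+2), (ε+1).choose k := by
      apply Finset.sum_le_sum_of_subset
      intro k hk
      rw [Finset.mem_Icc] at hk
      rw [Finset.mem_range]
      omega
    have h2 : ∑ k ∈ Finset.range (ε+2), (ε+1).choose k = 2^(ε+1) := Nat.sum_range_choose (ε+1)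
    calc (∑ k ∈ Finset.Icc 1 ε, ((ε+1).choose k : ℝ)) = ((∑ k ∈ Finset.Icc 1 ε, (ε+1).choose k : ℕ) : ℝ) := by push_cast; ring
    _ ≤ ((2^(ε+1) : ℕ) : ℝ) := by exact_mod_cast h1.trans h2.le
    _ = 2^(ε+1) := by push_cast; ring
  -- Iball bound
  have hI : Iball n ε (ε+1) ≤ 2^(ε+2) * X * r^c / 2^n := by
    rw [hIeq]
    gcongr ?_ / (2^n)
    calc (∑ k ∈ Finset.Icc 1 ε, ((ε+1).choose k : ℝ) *
          ∑ i ∈ Finset.range (min (ε - k) (ε + k - (ε+1)) + 1), ((n - (ε+1)).choose i : ℝ))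
        ≤ ∑ k ∈ Finset.Icc 1 ε, ((ε+1).choose k : ℝ) * (2 * (X * r ^ c)) := by
          apply Finset.sum_le_sum
          intro k hk
          exact mul_le_mul_of_nonneg_left (hInner k hk) (by positivity)
      _ = (∑ k ∈ Finset.Icc 1 ε, ((ε+1).choose k : ℝ)) * (2 * (X * r ^ c)) :=
          (Finset.sum_mul _ _ _).symm
      _ ≤ 2^(ε+1) * (2 * (X * r ^ c)) := by
          apply mul_le_mul_of_nonneg_right hsumC (by positivity)
      _ = 2^(ε+2) * X * r^c := by ring
  -- positivity of Iball
  have hIpos : 0 ≤ Iball n ε (ε+1) := by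
    rw [hIeq]
    positivity
  -- sqrt term
  set S : ℝ := Real.sqrt (8 * ε * (1 - (ε : ℝ) / n)) with hS
  have hε1R : (1:ℝ) ≤ (ε:ℝ) := by exact_mod_cast (by omega : 1 ≤ ε)
  have hq2 : (1:ℝ)/2 < 1 - (ε:ℝ)/n := by linarith
  have hS2 : 2 < S := by
    rw [hS]
    rw [show (2:ℝ) = Real.sqrt 4 by rw [show (4:ℝ) = 2^2 by norm_num, Real.sqrt_sq (by norm_num)]]
    apply Real.sqrt_lt_sqrt (by norm_num)
    nlinarith
  have hSpos : 0 < S := by linarith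
  -- rewrite the ratio
  have hs_eq : (1 - (ε:ℝ)/n) / ((ε:ℝ)/n) = ((n:ℝ) - ε)/ε := by
    have hεR : (0:ℝ) < (ε:ℝ) := by linarith
    field_simp
  have hsr : (((n:ℝ) - ε)/ε)^c * r^c = 1 := by
    have h1 : ((n:ℝ) - ε)/ε * r = 1 := by
      rw [hr]
      field_simp
    rw [← mul_pow, h1, one_pow]
  rw [hs_eq] at hNmax
  have hNT : ((N:ℝ) - 1) ≤ (2:ℝ)^(-(ε:ℝ)) * (((n:ℝ) - ε)/ε)^c / S := by
    linarith
  have hTpos : (0:ℝ) ≤ (2:ℝ)^(-(ε:ℝ)) * (((n:ℝ) - ε)/ε)^c / S := by positivity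
  have hrpow : (2:ℝ)^(-(ε:ℝ)) = ((2:ℝ)^ε)⁻¹ := by
    rw [Real.rpow_neg (by norm_num), Real.rpow_natCast]
  -- key strict inequality
  have key : ((N:ℝ) - 1)/2 * Iball n ε (ε+1) < X / 2^n := by
    have hb1 : ((N:ℝ) - 1)/2 * Iball n ε (ε+1)
        ≤ ((2:ℝ)^(-(ε:ℝ)) * (((n:ℝ) - ε)/ε)^c / S)/2 * (2^(ε+2) * X * r^c / 2^n) := by
      apply mul_le_mul (by linarith) hI hIpos (by positivity)
    have hb2 : ((2:ℝ)^(-(ε:ℝ)) * (((n:ℝ) - ε)/ε)^c / S)/2 * (2^(ε+2) * X * r^c / 2^n)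
        = 2 * X / (S * 2^n) := by
      rw [hrpow]
      have h4 : ((2:ℝ)^ε)⁻¹ * 2^(ε+2) / 2 = 2 := by
        have h2ne : ((2:ℝ)^ε) ≠ 0 := by positivity
        rw [pow_add]
        field_simp
      calc (((2:ℝ)^ε)⁻¹ * (((n:ℝ) - ε)/ε)^c / S)/2 * (2^(ε+2) * X * r^c / 2^n)
          = ((((n:ℝ) - ε)/ε)^c * r^c) * (((2:ℝ)^ε)⁻¹ * 2^(ε+2) / 2) * (X/(S*2^n)) := by
            ring
        _ = 2 * X / (S * 2^n) := by rw [hsr, h4]; ring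
    have hb3 : 2 * X / (S * 2^n) < X / 2^n := by
      rw [div_lt_div_iff₀ (by positivity) (by positivity)]
      have hpn : (0:ℝ) < 2^n := by positivity
      nlinarith [mul_pos (mul_pos hXpos hpn) (sub_pos.mpr hS2)]
    calc ((N:ℝ) - 1)/2 * Iball n ε (ε+1) ≤ _ := hb1
      _ = 2 * X / (S * 2^n) := hb2
      _ < X / 2^n := hb3
  -- Vball lower bound
  have hV : X / 2^n ≤ Vball n ε := by
    unfold Vball
    gcongr ?_ / (2^n)
    exact Finset.single_le_sum (f := fun k => (n.choose k : ℝ))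
      (fun i _ => by positivity) (Finset.self_mem_range_succ ε)
  have hkey2 : ((N:ℝ) - 1)/2 * Iball n ε (ε+1) < Vball n ε := key.trans_le hV
  have hN1 : (1:ℝ) ≤ (N:ℝ) := by exact_mod_cast hN
  have h5 : 0 < Vball n ε - ((N:ℝ) - 1)/2 * Iball n ε (ε+1) := by linarith
  calc (0:ℝ) < (N:ℝ) * (Vball n ε - ((N:ℝ) - 1)/2 * Iball n ε (ε+1)) :=
        mul_pos (by linarith) h5
    _ = (N : ℝ) * Vball n ε - (N : ℝ) * ((N : ℝ) - 1) / 2 * Iball n ε (ε + 1) := by ring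
end
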